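/- Let Φ(t) be the fundamental matrix solution of the linear cyclic negative feedback system with Φ(0) = I, let 1 ≤ h ≤ (ñ+1)/2, and let Σ⁰ ⊂ K^h be a linear subspace of ℝⁿ. For t ∈ ℝ let Σ^t = Φ(t)(Σ⁰). Then dim Σ^t = dim Σ⁰ for all t ∈ ℝ, and Σ^t ⊂ K^h for all t ≤ 0. -/

import Mathlib

open Filter Topology

/-- δ₁ = −1 (index `0` in our 0-based indexing), δᵢ = 1 for the other indices. -/
def cyclicDelta (n : ℕ) [NeZero n] (i : Fin n) : ℝ := if i = 0 then -1 else 1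

/-- The set Λ of vectors with all coordinates nonzero. -/
def cyclicLambda (n : ℕ) [NeZero n] : Set (Fin n → ℝ) := {x | ∀ i, x i ≠ 0}

/-- The integer valued Lyapunov function `N(x) = card {i : δᵢ xᵢ x_{i−1} < 0}`
(cyclic indices, `x₀ = xₙ`). -/
noncomputable def cyclicN (n : ℕ) [NeZero n] (x : Fin n → ℝ) : ℕ :=
  Nat.card {i : Fin n // cyclicDelta n i * x i * x (i - 1) < 0}

/-- `N_m(x)`: the minimum of `N` over `U ∩ Λ` for all sufficiently small
neighborhoods `U` of `x`, i.e. the least value of `N` attained in every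
neighborhood of `x` within `Λ`. -/
noncomputable def cyclicNm (n : ℕ) [NeZero n] (x : Fin n → ℝ) : ℕ :=
  sInf {k | ∃ᶠ y in 𝓝[cyclicLambda n] x, cyclicN n y = k}

/-- `N_M(x)`: the maximum of `N` over `U ∩ Λ` for all sufficiently small
neighborhoods `U` of `x`. -/
noncomputable def cyclicNM (n : ℕ) [NeZero n] (x : Fin n → ℝ) : ℕ :=
  sSup {k | ∃ᶠ y in 𝓝[cyclicLambda n] x, cyclicN n y = k}

/-- The set 𝒩 on which `N` extends continuously. -/
def cyclicGood (n : ℕ) [NeZero n] : Set (Fin n → ℝ) :=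
  {x | cyclicNm n x = cyclicNM n x}

/-- ñ = n if n is odd, n − 1 if n is even. -/
def ntilde (n : ℕ) : ℕ := if n % 2 = 1 then n else n - 1

/-- A linear cyclic negative feedback system: coefficients `diag t i = a_{ii}(t)`
and `sub t i = a_{i,i−1}(t)` (cyclically, `sub t 0 = a_{1,n}(t)`), all continuous,
with `a_{1,n}(t) < 0` and `a_{i,i−1}(t) > 0` for `i ≠ 1`. -/
structure LinCNF (n : ℕ) [NeZero n] where
  diag : ℝ → Fin n → ℝ
  sub : ℝ → Fin n → ℝ
  cont_diag : ∀ i, Continuous fun t => diag t i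
  cont_sub : ∀ i, Continuous fun t => sub t i
  sub_neg : ∀ t, sub t 0 < 0
  sub_pos : ∀ t (i : Fin n), i ≠ 0 → 0 < sub t i

/-- `x` is a solution of the linear system `ẋᵢ = a_{ii}(t)xᵢ + a_{i,i−1}(t)x_{i−1}`. -/
def LinCNF.IsSolution {n : ℕ} [NeZero n] (S : LinCNF n) (x : ℝ → Fin n → ℝ) : Prop :=
  ∀ (t : ℝ) (i : Fin n),
    HasDerivAt (fun s => x s i) (S.diag t i * x t i + S.sub t i * x t (i - 1)) t

/-- `Φ` is the fundamental (matrix) solution, `Φ(0) = I`. -/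
def LinCNF.IsFundamental {n : ℕ} [NeZero n] (S : LinCNF n)
    (Φ : ℝ → (Fin n → ℝ) →ₗ[ℝ] (Fin n → ℝ)) : Prop :=
  Φ 0 = LinearMap.id ∧ ∀ x₀ : Fin n → ℝ, S.IsSolution fun t => Φ t x₀

/-- The cone `K_h = {0} ∪ {x : N_M(x) ≤ 2h − 1}`. -/
def Kcone (n : ℕ) [NeZero n] (h : ℕ) : Set (Fin n → ℝ) :=
  {0} ∪ {x | cyclicNM n x ≤ 2 * h - 1}

/-- The complementary cone `K^h = {0} ∪ {x : N_m(x) > 2h − 1}`. -/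
def KconeUp (n : ℕ) [NeZero n] (h : ℕ) : Set (Fin n → ℝ) :=
  {0} ∪ {x | 2 * h - 1 < cyclicNm n x}

section A
variable {n : ℕ} [NeZero n] {S : LinCNF n} {x : ℝ → Fin n → ℝ}

lemma sol_cont (hx : S.IsSolution x) (i : Fin n) : Continuous fun t => x t i :=
  continuous_iff_continuousAt.2 fun t => (hx t i).continuousAt

lemma sol_contP (hx : S.IsSolution x) : Continuous x :=
  continuous_pi fun i => sol_cont hx i

/-- A solution vanishing somewhere vanishes everywhere. -/
lemma sol_eq_zero (hx : S.IsSolution x) {t₀ : ℝ} (h0 : x t₀ = 0) (t : ℝ) : x t = 0 := by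
  set a : ℝ := min t t₀ - 1 with ha
  set b : ℝ := max t t₀ + 1 with hb
  have hab : t₀ ∈ Set.Ioo a b :=
    ⟨by simp only [ha]; nlinarith [min_le_right t t₀], by simp only [hb]; nlinarith [le_max_right t t₀]⟩
  have htab : t ∈ Set.Icc a b :=
    ⟨by simp only [ha]; nlinarith [min_le_left t t₀], by simp only [hb]; nlinarith [le_max_left t t₀]⟩
  -- bound the coefficients on [a, b]
  obtain ⟨C, hC⟩ : ∃ C : ℝ, ∀ s ∈ Set.Icc a b,
      ‖∑ i : Fin n, (|S.diag s i| + |S.sub s i|)‖ ≤ C := by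
    have hcont : Continuous fun s => ∑ i : Fin n, (|S.diag s i| + |S.sub s i|) :=
      continuous_finset_sum _ fun i _ => ((S.cont_diag i).abs.add ((S.cont_sub i).abs))
    exact isCompact_Icc.exists_bound_of_continuousOn hcont.continuousOn
  have hCi : ∀ s ∈ Set.Icc a b, ∀ i : Fin n, |S.diag s i| ≤ C ∧ |S.sub s i| ≤ C := by
    intro s hs i
    have h1 := hC s hs
    rw [Real.norm_eq_abs] at h1
    have h2 : ∀ j : Fin n, (0:ℝ) ≤ |S.diag s j| + |S.sub s j| := fun j => by positivity
    have h3 : |S.diag s i| + |S.sub s i| ≤ ∑ j : Fin n, (|S.diag s j| + |S.sub s j|) :=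
      Finset.single_le_sum (fun j _ => h2 j) (Finset.mem_univ i)
    have h4 : ∑ j : Fin n, (|S.diag s j| + |S.sub s j|) ≤ C := (le_abs_self _).trans h1
    constructor <;> nlinarith [abs_nonneg (S.diag s i), abs_nonneg (S.sub s i)]
  have hC0 : 0 ≤ C := by
    have := (hCi a (Set.left_mem_Icc.2 (by nlinarith [min_le_max (a := t) (b := t₀)])) 0).1
    nlinarith [abs_nonneg (S.diag a 0)]
  -- the (time-clamped) vector field
  set c : ℝ → ℝ := fun s => max a (min b s) with hc
  have hcmem : ∀ s, c s ∈ Set.Icc a b := by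
    intro s
    refine ⟨le_max_left _ _, max_le (by nlinarith [min_le_max (a := t) (b := t₀)]) (min_le_left _ _)⟩
  have hceq : ∀ s ∈ Set.Icc a b, c s = s := by
    intro s hs
    simp only [hc]
    rw [min_eq_right hs.2, max_eq_right hs.1]
  set v : ℝ → (Fin n → ℝ) → (Fin n → ℝ) :=
    fun s y => fun i => S.diag (c s) i * y i + S.sub (c s) i * y (i - 1) with hv
  have hlip : ∀ s, LipschitzOnWith (2 * C).toNNReal (v s) Set.univ := by
    intro s
    apply LipschitzOnWith.of_dist_le_mul
    intro y _ z _
    rw [dist_pi_le_iff (by positivity)]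
    intro i
    have hci := hCi (c s) (hcmem s) i
    rw [Real.dist_eq]
    have e1 : v s y i - v s z i
        = S.diag (c s) i * (y i - z i) + S.sub (c s) i * (y (i-1) - z (i-1)) := by
      simp only [hv]; ring
    rw [e1]
    have hd1 : |y i - z i| ≤ dist y z := by
      rw [← Real.dist_eq]; exact dist_le_pi_dist y z i
    have hd2 : |y (i-1) - z (i-1)| ≤ dist y z := by
      rw [← Real.dist_eq]; exact dist_le_pi_dist y z (i-1)
    calc |S.diag (c s) i * (y i - z i) + S.sub (c s) i * (y (i-1) - z (i-1))|
        ≤ |S.diag (c s) i * (y i - z i)| + |S.sub (c s) i * (y (i-1) - z (i-1))| := abs_add_le _ _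
      _ = |S.diag (c s) i| * |y i - z i| + |S.sub (c s) i| * |y (i-1) - z (i-1)| := by
          rw [abs_mul, abs_mul]
      _ ≤ C * dist y z + C * dist y z :=
          add_le_add (mul_le_mul hci.1 hd1 (abs_nonneg _) hC0)
            (mul_le_mul hci.2 hd2 (abs_nonneg _) hC0)
      _ = (2 * C) * dist y z := by ring
      _ = ((2 * C).toNNReal : ℝ) * dist y z := by
          rw [Real.coe_toNNReal _ (by positivity)]
  have key : Set.EqOn x (fun _ => (0 : Fin n → ℝ)) (Set.Icc a b) := by
    apply ODE_solution_unique_of_mem_Icc (s := fun _ => Set.univ) (fun s _ => hlip s) hab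
    · exact (sol_contP hx).continuousOn
    · intro s hs
      have : HasDerivAt x (fun i => S.diag s i * x s i + S.sub s i * x s (i-1)) s :=
        hasDerivAt_pi.2 fun i => hx s i
      refine this.congr_deriv ?_
      funext i
      simp only [hv, hceq s (Set.mem_Icc_of_Ioo hs)]
    · exact fun _ _ => Set.mem_univ _
    · exact continuousOn_const
    · intro s hs
      have hz : v s 0 = 0 := by
        funext i; simp [hv]
      rw [hz]
      exact hasDerivAt_const _ _
    · exact fun _ _ => Set.mem_univ _
    · simpa using h0
  simpa using key htab
end A

section fund
variable {n : ℕ} [NeZero n] {S : LinCNF n} {Φ : ℝ → (Fin n → ℝ) →ₗ[ℝ] (Fin n → ℝ)}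

lemma fund_zero_of_zero (hΦ : S.IsFundamental Φ) {z : Fin n → ℝ} {t : ℝ}
    (h : Φ t z = 0) : z = 0 := by
  have := sol_eq_zero (hΦ.2 z) h 0
  rw [hΦ.1] at this
  simpa using this

lemma fund_inj (hΦ : S.IsFundamental Φ) (t : ℝ) : Function.Injective (Φ t) := by
  rw [← LinearMap.ker_eq_bot]
  rw [LinearMap.ker_eq_bot']
  exact fun z hz => fund_zero_of_zero hΦ hz
end fund

section INT
variable {n : ℕ} [NeZero n] {S : LinCNF n} {x : ℝ → Fin n → ℝ}

lemma delta_cases (n : ℕ) [NeZero n] (i : Fin n) :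
    cyclicDelta n i = 1 ∨ cyclicDelta n i = -1 := by
  unfold cyclicDelta; split <;> simp

lemma delta_mul_sub_pos (S : LinCNF n) (t : ℝ) (i : Fin n) :
    0 < cyclicDelta n i * S.sub t i := by
  unfold cyclicDelta
  split_ifs with h
  · subst h; have := S.sub_neg t; nlinarith
  · have := S.sub_pos t i h; nlinarith

/-- Sign propagation, forward in time. -/
lemma int_forward (hx : S.IsSolution x) {t₀ δ : ℝ} (hδ : 0 < δ) {i : Fin n}
    (h0 : x t₀ i = 0) {c : ℝ}
    (hc : ∀ s ∈ Set.Ioo t₀ (t₀ + δ), 0 < c * x s (i - 1)) :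
    ∀ s ∈ Set.Ioo t₀ (t₀ + δ), 0 < (cyclicDelta n i * c) * x s i := by
  set A : ℝ → ℝ := fun u => ∫ r in t₀..u, S.diag r i with hA
  have hA' : ∀ u : ℝ, HasDerivAt A (S.diag u i) u := fun u =>
    ((S.cont_diag i).integral_hasStrictDerivAt t₀ u).hasDerivAt
  set g : ℝ → ℝ := fun u => (cyclicDelta n i * c) * (Real.exp (-A u) * x u i) with hg
  have hg' : ∀ u : ℝ, HasDerivAt g
      ((cyclicDelta n i * c) * (Real.exp (-A u) * (S.sub u i * x u (i - 1)))) u := by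
    intro u
    have h1 : HasDerivAt (fun v => Real.exp (-A v)) (-S.diag u i * Real.exp (-A u)) u := by
      have := (((hA' u).neg).exp)
      exact this.congr_deriv (by simp only [Pi.neg_apply]; ring)
    have h2 := (h1.mul (hx u i))
    have h3 := h2.const_mul (cyclicDelta n i * c)
    refine h3.congr_deriv ?_
    ring
  intro s hs
  have hmono : StrictMonoOn g (Set.Icc t₀ s) := by
    apply strictMonoOn_of_deriv_pos (convex_Icc _ _)
    · exact (Continuous.continuousOn (by
        refine continuous_const.mul (Continuous.mul ?_ (sol_cont hx i))
        exact (Real.continuous_exp.comp ((intervalIntegral.continuous_primitive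
          (fun a b => ((S.cont_diag i)).intervalIntegrable a b) t₀).neg))))
    · intro u hu
      rw [interior_Icc] at hu
      rw [(hg' u).deriv]
      have hu' : u ∈ Set.Ioo t₀ (t₀ + δ) := ⟨hu.1, lt_trans hu.2 hs.2⟩
      have hsub := delta_mul_sub_pos S u i
      have hcx := hc u hu'
      have he : 0 < Real.exp (-A u) := Real.exp_pos _
      have key : cyclicDelta n i * c * (Real.exp (-A u) * (S.sub u i * x u (i-1)))
          = Real.exp (-A u) * ((cyclicDelta n i * S.sub u i) * (c * x u (i-1))) := by ring
      rw [key]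
      exact mul_pos he (mul_pos hsub hcx)
  have h1 : g t₀ < g s := hmono (Set.left_mem_Icc.2 hs.1.le) (Set.right_mem_Icc.2 hs.1.le) hs.1
  have h2 : g t₀ = 0 := by simp [hg, h0]
  rw [h2] at h1
  have he : 0 < Real.exp (-A s) := Real.exp_pos _
  simp only [hg] at h1
  have key : cyclicDelta n i * c * (Real.exp (-A s) * x s i)
      = Real.exp (-A s) * ((cyclicDelta n i * c) * x s i) := by ring
  rw [key] at h1
  nlinarith

/-- Sign propagation, backward in time. -/
lemma int_backward (hx : S.IsSolution x) {t₀ δ : ℝ} (hδ : 0 < δ) {i : Fin n}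
    (h0 : x t₀ i = 0) {c : ℝ}
    (hc : ∀ s ∈ Set.Ioo (t₀ - δ) t₀, 0 < c * x s (i - 1)) :
    ∀ s ∈ Set.Ioo (t₀ - δ) t₀, 0 < (-(cyclicDelta n i * c)) * x s i := by
  set A : ℝ → ℝ := fun u => ∫ r in t₀..u, S.diag r i with hA
  have hA' : ∀ u : ℝ, HasDerivAt A (S.diag u i) u := fun u =>
    ((S.cont_diag i).integral_hasStrictDerivAt t₀ u).hasDerivAt
  set g : ℝ → ℝ := fun u => (cyclicDelta n i * c) * (Real.exp (-A u) * x u i) with hg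
  have hg' : ∀ u : ℝ, HasDerivAt g
      ((cyclicDelta n i * c) * (Real.exp (-A u) * (S.sub u i * x u (i - 1)))) u := by
    intro u
    have h1 : HasDerivAt (fun v => Real.exp (-A v)) (-S.diag u i * Real.exp (-A u)) u := by
      have := (((hA' u).neg).exp)
      exact this.congr_deriv (by simp only [Pi.neg_apply]; ring)
    have h2 := (h1.mul (hx u i))
    have h3 := h2.const_mul (cyclicDelta n i * c)
    refine h3.congr_deriv ?_
    ring
  intro s hs
  have hmono : StrictMonoOn g (Set.Icc s t₀) := by
    apply strictMonoOn_of_deriv_pos (convex_Icc _ _)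
    · exact (Continuous.continuousOn (by
        refine continuous_const.mul (Continuous.mul ?_ (sol_cont hx i))
        exact (Real.continuous_exp.comp ((intervalIntegral.continuous_primitive
          (fun a b => ((S.cont_diag i)).intervalIntegrable a b) t₀).neg))))
    · intro u hu
      rw [interior_Icc] at hu
      rw [(hg' u).deriv]
      have hu' : u ∈ Set.Ioo (t₀ - δ) t₀ := ⟨lt_trans hs.1 hu.1, hu.2⟩
      have hsub := delta_mul_sub_pos S u i
      have hcx := hc u hu'
      have he : 0 < Real.exp (-A u) := Real.exp_pos _
      have key : cyclicDelta n i * c * (Real.exp (-A u) * (S.sub u i * x u (i-1)))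
          = Real.exp (-A u) * ((cyclicDelta n i * S.sub u i) * (c * x u (i-1))) := by ring
      rw [key]
      exact mul_pos he (mul_pos hsub hcx)
  have h1 : g s < g t₀ := hmono (Set.left_mem_Icc.2 hs.2.le) (Set.right_mem_Icc.2 hs.2.le) hs.2
  have h2 : g t₀ = 0 := by simp [hg, h0]
  rw [h2] at h1
  have he : 0 < Real.exp (-A s) := Real.exp_pos _
  simp only [hg] at h1
  have key : cyclicDelta n i * c * (Real.exp (-A s) * x s i)
      = Real.exp (-A s) * ((cyclicDelta n i * c) * x s i) := by ring
  rw [key] at h1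
  nlinarith
end INT

section CHAIN
open Fin.NatCast
variable {n : ℕ} [NeZero n] {S : LinCNF n} {x : ℝ → Fin n → ℝ}

/-- Signs of the solution just after (σ) and just before (τ) time `t₀`. -/
lemma chain_signs (hx : S.IsSolution x) {t₀ : ℝ} (hx0 : x t₀ ≠ 0) :
    ∃ σ τ : Fin n → ℝ, (∀ i, σ i ≠ 0) ∧ (∀ i, τ i ≠ 0) ∧
      (∀ i, x t₀ i ≠ 0 → σ i = x t₀ i ∧ τ i = x t₀ i) ∧
      (∀ i, x t₀ i = 0 → σ i = cyclicDelta n i * σ (i-1)) ∧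
      ∃ δ > 0, (∀ s ∈ Set.Ioo t₀ (t₀+δ), ∀ i, 0 < σ i * x s i) ∧
               (∀ s ∈ Set.Ioo (t₀-δ) t₀, ∀ i, 0 < τ i * x s i) := by
  have hex : ∀ i : Fin n, ∃ m : ℕ, x t₀ (i - (m : Fin n)) ≠ 0 := by
    intro i
    obtain ⟨j, hj⟩ := Function.ne_iff.1 hx0
    refine ⟨((i - j : Fin n) : ℕ), ?_⟩
    rw [Fin.cast_val_eq_self]
    simpa [sub_sub_cancel] using hj
  set d : Fin n → ℕ := fun i => Nat.find (hex i) with hd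
  set σ : Fin n → ℝ :=
    fun i => (∏ k ∈ Finset.range (d i), cyclicDelta n (i - (k : Fin n))) *
      x t₀ (i - ((d i : ℕ) : Fin n)) with hσ
  set τ : Fin n → ℝ := fun i => (-1)^(d i) * σ i with hτ
  have f1 : ∀ i, x t₀ (i - ((d i : ℕ) : Fin n)) ≠ 0 := fun i => Nat.find_spec (hex i)
  have f2 : ∀ i, ∀ m < d i, x t₀ (i - (m : Fin n)) = 0 := by
    intro i m hm
    by_contra hne
    exact Nat.find_min (hex i) hm hne
  have f3 : ∀ i, x t₀ i ≠ 0 → d i = 0 := by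
    intro i hi
    rw [hd]
    rw [Nat.find_eq_zero]
    simpa using hi
  have f4 : ∀ i, d i ≠ 0 → x t₀ i = 0 := by
    intro i hi
    have := f2 i 0 (Nat.pos_of_ne_zero hi)
    simpa using this
  have fσ0 : ∀ i, σ i ≠ 0 := by
    intro i
    apply mul_ne_zero _ (f1 i)
    rw [Finset.prod_ne_zero_iff]
    intro k _
    rcases delta_cases n (i - (k : Fin n)) with h | h <;> rw [h] <;> norm_num
  have fτ0 : ∀ i, τ i ≠ 0 := by
    intro i
    apply mul_ne_zero _ (fσ0 i)
    exact pow_ne_zero _ (by norm_num)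
  have fnz : ∀ i, x t₀ i ≠ 0 → σ i = x t₀ i ∧ τ i = x t₀ i := by
    intro i hi
    have h0 : d i = 0 := f3 i hi
    constructor
    · rw [hσ]; simp only [h0]; simp
    · rw [hτ]; simp only [h0, pow_zero, one_mul]
      rw [hσ]; simp only [h0]; simp
  -- the recurrence for indices in a zero chain
  have f5 : ∀ i : Fin n, d i ≠ 0 →
      d (i-1) = d i - 1 ∧ σ i = cyclicDelta n i * σ (i-1) ∧
      τ i = -(cyclicDelta n i) * τ (i-1) := by
    intro i hi
    obtain ⟨m, hm⟩ : ∃ m, d i = m + 1 := ⟨d i - 1, (Nat.succ_pred_eq_of_pos (Nat.pos_of_ne_zero hi)).symm⟩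
    have hcast : ((m+1 : ℕ) : Fin n) = (m : Fin n) + 1 := by push_cast; ring
    have hsub : ∀ k : ℕ, i - ((k+1 : ℕ) : Fin n) = (i - 1) - (k : Fin n) := by
      intro k; push_cast; abel
    have hdpred : d (i-1) = m := by
      rw [hd]
      rw [Nat.find_eq_iff]
      constructor
      · have := f1 i
        rw [hm] at this
        rwa [hsub m] at this
      · intro k hk
        simp only [not_not]
        have := f2 i (k+1) (by omega)
        rwa [hsub k] at this
    have hσrec : σ i = cyclicDelta n i * σ (i-1) := by
      rw [hσ]
      simp only [hm, hdpred]
      rw [Finset.prod_range_succ']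
      have e1 : ∀ k ∈ Finset.range m,
          cyclicDelta n (i - ((k+1 : ℕ) : Fin n)) = cyclicDelta n ((i-1) - (k : Fin n)) := by
        intro k _; rw [hsub k]
      rw [Finset.prod_congr rfl e1]
      rw [hsub m]
      have : (((0:ℕ)) : Fin n) = 0 := by norm_num
      rw [this, sub_zero]
      ring
    refine ⟨by omega, hσrec, ?_⟩
    have h1 : τ i = (-1)^(d i) * σ i := rfl
    have h2 : τ (i-1) = (-1)^(d (i-1)) * σ (i-1) := rfl
    rw [h1, h2, hm, hdpred, hσrec]
    ring
  have f6 : ∀ i, x t₀ i = 0 → d i ≠ 0 := by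
    intro i hi hdi
    have := f1 i
    rw [hdi] at this
    simp [hi] at this
  -- the per-coordinate interval, by induction on d i
  have main : ∀ k : ℕ, ∀ i : Fin n, d i = k → ∃ δ > 0,
      (∀ s ∈ Set.Ioo t₀ (t₀+δ), 0 < σ i * x s i) ∧
      (∀ s ∈ Set.Ioo (t₀-δ) t₀, 0 < τ i * x s i) := by
    intro k
    induction k with
    | zero =>
      intro i hik
      have hxne : x t₀ i ≠ 0 := by
        by_contra hzz
        have := f1 i
        rw [hik] at this
        simp [hzz] at this
      obtain ⟨hσi, hτi⟩ := fnz i hxne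
      have hpos : 0 < σ i * x t₀ i := by rw [hσi]; exact mul_self_pos.2 hxne
      have hcont : ContinuousAt (fun s => σ i * x s i) t₀ :=
        (continuous_const.mul (sol_cont hx i)).continuousAt
      have hev : ∀ᶠ s in 𝓝 t₀, 0 < σ i * x s i := hcont.eventually_mem (Ioi_mem_nhds hpos)
      rw [Metric.eventually_nhds_iff] at hev
      obtain ⟨ε, hε, hball⟩ := hev
      refine ⟨ε, hε, ?_, ?_⟩
      · intro s hs
        exact hball (by rw [Real.dist_eq, abs_lt]; constructor <;> [linarith [hs.1]; linarith [hs.2]])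
      · intro s hs
        rw [hτi, ← hσi]
        exact hball (by rw [Real.dist_eq, abs_lt]; constructor <;> [linarith [hs.1]; linarith [hs.2]])
    | succ k ih =>
      intro i hik
      have hine : d i ≠ 0 := by omega
      obtain ⟨hdp, hσr, hτr⟩ := f5 i hine
      have hdpk : d (i-1) = k := by omega
      obtain ⟨δ₁, hδ₁, hfwd, hbwd⟩ := ih (i-1) hdpk
      have hx0i : x t₀ i = 0 := f4 i hine
      refine ⟨δ₁, hδ₁, ?_, ?_⟩
      · intro s hs
        have := int_forward hx hδ₁ hx0i (c := σ (i-1)) hfwd s hs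
        rw [hσr]
        calc (0:ℝ) < (cyclicDelta n i * σ (i-1)) * x s i := this
          _ = cyclicDelta n i * σ (i-1) * x s i := by ring
      · intro s hs
        have := int_backward hx hδ₁ hx0i (c := τ (i-1)) hbwd s hs
        rw [hτr]
        calc (0:ℝ) < (-(cyclicDelta n i * τ (i-1))) * x s i := this
          _ = -(cyclicDelta n i) * τ (i-1) * x s i := by ring
  -- combine over all coordinates
  choose δf hδf hFw hBw using fun i => main (d i) i rfl
  obtain ⟨i₀, _, hi₀⟩ := Finset.exists_min_image Finset.univ δf ⟨0, Finset.mem_univ 0⟩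
  refine ⟨σ, τ, fσ0, fτ0, fnz, fun i hi => (f5 i (f6 i hi)).2.1, δf i₀, hδf i₀, ?_, ?_⟩
  · intro s hs i
    exact hFw i s ⟨hs.1, lt_of_lt_of_le hs.2 (by linarith [hi₀ i (Finset.mem_univ i)])⟩
  · intro s hs i
    exact hBw i s ⟨lt_of_le_of_lt (by linarith [hi₀ i (Finset.mem_univ i)]) hs.1, hs.2⟩

end CHAIN

section NM
variable {n : ℕ} [NeZero n]

lemma sign_lt_iff {d a b a' b' : ℝ} (hd : d = 1 ∨ d = -1)
    (ha : 0 < a * a') (hb : 0 < b * b') : d * a * b < 0 ↔ d * a' * b' < 0 := by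
  rcases hd with h | h <;> subst h <;>
    constructor <;> intro hlt <;> nlinarith

lemma cyclicN_congr_sign {y z : Fin n → ℝ} (h : ∀ i, 0 < y i * z i) :
    cyclicN n y = cyclicN n z := by
  unfold cyclicN
  apply Nat.card_congr
  apply Equiv.subtypeEquivRight
  intro i
  exact sign_lt_iff (delta_cases n i) (h i) (h (i-1))

/-- completion of a vector: nonzero everywhere, agreeing in sign at nonzero coords. -/
def IsCompletion {n : ℕ} [NeZero n] (x σ : Fin n → ℝ) : Prop :=
  (∀ i, σ i ≠ 0) ∧ (∀ i, x i ≠ 0 → 0 < x i * σ i)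

lemma freq_of_completion {x σ : Fin n → ℝ} (h : IsCompletion x σ) :
    ∃ᶠ y in 𝓝[cyclicLambda n] x, cyclicN n y = cyclicN n σ := by
  set f : ℝ → (Fin n → ℝ) := fun ε => fun i => if x i = 0 then ε * σ i else x i with hf
  have hcont : Continuous f := by
    apply continuous_pi
    intro i
    by_cases hxi : x i = 0 <;> simp only [hf, hxi, if_true, if_false]
    · exact continuous_id.mul continuous_const
    · exact continuous_const
  have hf0 : f 0 = x := by
    funext i
    by_cases hxi : x i = 0 <;> simp [hf, hxi]
  have htend : Filter.Tendsto f (𝓝[>] (0:ℝ)) (𝓝[cyclicLambda n] x) := by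
    apply tendsto_nhdsWithin_of_tendsto_nhds_of_eventually_within
    · rw [← hf0]
      exact (hcont.tendsto 0).mono_left nhdsWithin_le_nhds
    · filter_upwards [self_mem_nhdsWithin] with ε (hε : 0 < ε)
      intro i
      by_cases hxi : x i = 0 <;> simp only [hf, hxi, if_true, if_false]
      · exact mul_ne_zero (ne_of_gt hε) (h.1 i)
      · exact hxi
  apply htend.frequently
  apply Filter.Eventually.frequently
  filter_upwards [self_mem_nhdsWithin] with ε (hε : 0 < ε)
  apply cyclicN_congr_sign
  intro i
  by_cases hxi : x i = 0 <;> simp only [hf, hxi, if_true, if_false]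
  · have := h.1 i
    have h2 : 0 < σ i * σ i := mul_self_pos.2 this
    calc (0:ℝ) < ε * (σ i * σ i) := by positivity
      _ = ε * σ i * σ i := by ring
  · exact h.2 i hxi

lemma cyclicNm_le_completion {x σ : Fin n → ℝ} (h : IsCompletion x σ) :
    cyclicNm n x ≤ cyclicN n σ :=
  Nat.sInf_le (freq_of_completion h)

lemma exists_completion_eq_cyclicNm (x : Fin n → ℝ) :
    ∃ σ, IsCompletion x σ ∧ cyclicN n σ = cyclicNm n x := by
  have htriv : IsCompletion x (fun i => if x i = 0 then 1 else x i) := by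
    constructor
    · intro i; by_cases hxi : x i = 0 <;> simp [hxi]
    · intro i hxi; simp only [hxi, if_false]; exact mul_self_pos.2 hxi
  have hne : {k | ∃ᶠ y in 𝓝[cyclicLambda n] x, cyclicN n y = k}.Nonempty :=
    ⟨_, freq_of_completion htriv⟩
  have hmem : ∃ᶠ y in 𝓝[cyclicLambda n] x, cyclicN n y = cyclicNm n x :=
    Nat.sInf_mem hne
  -- the neighborhood of sign-agreement
  have hU : {y : Fin n → ℝ | ∀ i, x i ≠ 0 → 0 < x i * y i} ∈ 𝓝 x := by
    have : ∀ᶠ y in 𝓝 x, ∀ i, x i ≠ 0 → 0 < x i * y i := by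
      rw [eventually_all]
      intro i
      by_cases hxi : x i = 0
      · filter_upwards with y hxi'; exact absurd hxi hxi'
      · have hcont : ContinuousAt (fun y : Fin n → ℝ => x i * y i) x :=
          (continuous_const.mul (continuous_apply i)).continuousAt
        have hpos : 0 < x i * x i := mul_self_pos.2 hxi
        filter_upwards [hcont.eventually_mem (Ioi_mem_nhds hpos)] with y hy _
        exact hy
    exact this
  have hUev : ∀ᶠ y in 𝓝[cyclicLambda n] x, ∀ i, x i ≠ 0 → 0 < x i * y i :=
    eventually_nhdsWithin_of_eventually_nhds (Filter.eventually_of_mem hU fun y hy => hy)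
  obtain ⟨y, hNy, hyU, hyL⟩ :=
    (hmem.and_eventually (hUev.and self_mem_nhdsWithin)).exists
  exact ⟨y, ⟨hyL, hyU⟩, hNy⟩

lemma cyclicNm_of_lambda {x : Fin n → ℝ} (hx : x ∈ cyclicLambda n) :
    cyclicNm n x = cyclicN n x := by
  apply le_antisymm
  · exact cyclicNm_le_completion ⟨hx, fun i _ => mul_self_pos.2 (hx i)⟩
  · obtain ⟨σ, hσ, hσN⟩ := exists_completion_eq_cyclicNm (n := n) x
    rw [← hσN]
    have : cyclicN n x = cyclicN n σ :=
      cyclicN_congr_sign fun i => hσ.2 i (hx i)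
    exact le_of_eq this
end NM

section COMB
open Fin.NatCast
variable {n : ℕ} [NeZero n]

lemma cyclicN_eq_card (y : Fin n → ℝ) : cyclicN n y
    = (Finset.univ.filter fun i => cyclicDelta n i * y i * y (i-1) < 0).card := by
  rw [cyclicN, Nat.card_eq_fintype_card, Fintype.card_subtype]

lemma sign_flip_helper {d a b c e : ℝ} (hd : d = 1 ∨ d = -1)
    (h1 : 0 < d * a * b) (h2 : c * a < 0) (h3 : 0 < e * b) : d * c * e < 0 := by
  rcases hd with h | h <;> subst h <;> nlinarith

/-- The dynamically-determined completion minimizes `cyclicN`. -/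
lemma comb_min {x σ : Fin n → ℝ} (hx0 : x ≠ 0)
    (hσ0 : ∀ i, σ i ≠ 0)
    (hσa : ∀ i, x i ≠ 0 → σ i = x i)
    (hσb : ∀ i, x i = 0 → σ i = cyclicDelta n i * σ (i-1)) :
    ∀ τ : Fin n → ℝ, IsCompletion x τ → cyclicN n σ ≤ cyclicN n τ := by
  classical
  suffices H : ∀ k : ℕ, ∀ τ : Fin n → ℝ, IsCompletion x τ →
      (Finset.univ.filter fun i => τ i * σ i < 0).card = k → cyclicN n σ ≤ cyclicN n τ by
    intro τ hτ; exact H _ τ hτ rfl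
  intro k
  induction k using Nat.strong_induction_on with
  | _ k ih =>
    intro τ hτ hcard
    rcases Nat.eq_zero_or_pos k with hk0 | hkpos
    · -- no disagreement: same signs everywhere
      subst hk0
      rw [Finset.card_eq_zero, Finset.filter_eq_empty_iff] at hcard
      have hagree : ∀ i, 0 < σ i * τ i := by
        intro i
        have hne : τ i * σ i ≠ 0 := mul_ne_zero (hτ.1 i) (hσ0 i)
        have := hcard (Finset.mem_univ i)
        rcases hne.lt_or_gt with h | h
        · exact absurd h this
        · linarith [h]
      exact le_of_eq (cyclicN_congr_sign hagree)
    · -- pick a disagreement whose predecessor agrees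
      set D := Finset.univ.filter fun i => τ i * σ i < 0 with hD
      have hDne : D.Nonempty := Finset.card_pos.1 (by omega)
      have hnz_agree : ∀ i, x i ≠ 0 → i ∉ D := by
        intro i hxi hiD
        rw [hD, Finset.mem_filter] at hiD
        have h1 := hτ.2 i hxi
        have h2 := hσa i hxi
        rw [h2] at hiD
        nlinarith [hiD.2, h1]
      have hex : ∃ i₀ ∈ D, (i₀ - 1) ∉ D := by
        by_contra hcon
        push_neg at hcon
        obtain ⟨i, hi⟩ := hDne
        have hall : ∀ j, j ∈ D := by
          intro j
          have hm : ∀ m : ℕ, i - (m : Fin n) ∈ D := by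
            intro m
            induction m with
            | zero => simpa using hi
            | succ m ihm =>
              have := hcon _ ihm
              have e : i - ((m:ℕ) : Fin n) - 1 = i - (((m+1 : ℕ)) : Fin n) := by
                push_cast; abel
              rwa [e] at this
          have := hm ((i - j : Fin n)).val
          rwa [Fin.cast_val_eq_self, sub_sub_cancel] at this
        have : x = 0 := by
          funext j
          by_contra hxj
          exact hnz_agree j hxj (hall j)
        exact hx0 this
      obtain ⟨i₀, hi₀D, hi₀pred⟩ := hex
      have hdis : τ i₀ * σ i₀ < 0 := (Finset.mem_filter.1 hi₀D).2
      have hne10 : i₀ - 1 ≠ i₀ := fun h => hi₀pred (by rw [h]; exact hi₀D)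
      have hagr : 0 < τ (i₀-1) * σ (i₀-1) := by
        have hne : τ (i₀-1) * σ (i₀-1) ≠ 0 := mul_ne_zero (hτ.1 _) (hσ0 _)
        rcases hne.lt_or_gt with h | h
        · exact absurd (show (i₀ - 1) ∈ D from
            Finset.mem_filter.2 ⟨Finset.mem_univ _, h⟩) hi₀pred
        · exact h
      have hxz : x i₀ = 0 := by
        by_contra hxi
        exact hnz_agree i₀ hxi hi₀D
      have hδσ : 0 < cyclicDelta n i₀ * σ i₀ * σ (i₀-1) := by
        rw [hσb i₀ hxz]
        rcases delta_cases n i₀ with h | h <;> rw [h] <;>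
          nlinarith [mul_self_pos.2 (hσ0 (i₀-1))]
      set τ' := Function.update τ i₀ (-(τ i₀)) with hτ'
      have hτ'i₀ : τ' i₀ = -(τ i₀) := Function.update_self i₀ (-(τ i₀)) τ
      have hτ'ne : ∀ i, i ≠ i₀ → τ' i = τ i := fun i hi => Function.update_of_ne hi (-(τ i₀)) τ
      have hτ'compl : IsCompletion x τ' := by
        constructor
        · intro i
          by_cases h : i = i₀
          · rw [h, hτ'i₀]; exact neg_ne_zero.2 (hτ.1 i₀)
          · rw [hτ'ne i h]; exact hτ.1 i
        · intro i hxi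
          have h : i ≠ i₀ := fun he => hxi (he ▸ hxz)
          rw [hτ'ne i h]; exact hτ.2 i hxi
      have hcard' : (Finset.univ.filter fun i => τ' i * σ i < 0).card = k - 1 := by
        have hset : (Finset.univ.filter fun i => τ' i * σ i < 0) = D.erase i₀ := by
          ext i
          rw [Finset.mem_filter, Finset.mem_erase, hD, Finset.mem_filter]
          constructor
          · rintro ⟨_, hlt⟩
            have hne : i ≠ i₀ := by
              intro he
              subst he
              rw [hτ'i₀] at hlt
              nlinarith
            rw [hτ'ne i hne] at hlt
            exact ⟨hne, Finset.mem_univ _, hlt⟩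
          · rintro ⟨hne, _, hlt⟩
            rw [← hτ'ne i hne] at hlt
            exact ⟨Finset.mem_univ _, hlt⟩
        rw [hset, Finset.card_erase_of_mem hi₀D, hcard]
      -- counting: flipping at i₀ does not increase the count
      have hcount : cyclicN n τ' ≤ cyclicN n τ := by
        rw [cyclicN_eq_card, cyclicN_eq_card]
        set F := Finset.univ.filter fun i => cyclicDelta n i * τ i * τ (i-1) < 0 with hF
        set F' := Finset.univ.filter fun i => cyclicDelta n i * τ' i * τ' (i-1) < 0 with hF'
        have hPlt : cyclicDelta n i₀ * τ i₀ * τ (i₀-1) < 0 :=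
          sign_flip_helper (delta_cases n i₀) hδσ hdis hagr
        have hPi₀ : i₀ ∈ F := by
          rw [hF, Finset.mem_filter]
          exact ⟨Finset.mem_univ _, hPlt⟩
        have hsub : F' ⊆ insert (i₀+1) (F.erase i₀) := by
          intro i hi
          rw [hF', Finset.mem_filter] at hi
          have hne : i ≠ i₀ := by
            intro he
            subst he
            have hlt : cyclicDelta n i * τ' i * τ' (i-1) < 0 := hi.2
            rw [hτ'i₀, hτ'ne (i-1) hne10] at hlt
            nlinarith
          by_cases hip : i = i₀ + 1
          · rw [hip]; exact Finset.mem_insert_self _ _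
          · have hne1 : i - 1 ≠ i₀ := by
              intro he
              apply hip
              rw [← he]; abel
            apply Finset.mem_insert_of_mem
            rw [Finset.mem_erase]
            refine ⟨hne, ?_⟩
            rw [hF, Finset.mem_filter]
            have hlt := hi.2
            rw [hτ'ne i hne, hτ'ne (i-1) hne1] at hlt
            exact ⟨Finset.mem_univ _, hlt⟩
        calc F'.card ≤ (insert (i₀+1) (F.erase i₀)).card := Finset.card_le_card hsub
          _ ≤ (F.erase i₀).card + 1 := Finset.card_insert_le _ _
          _ = F.card := by
              rw [Finset.card_erase_of_mem hPi₀]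
              have := Finset.card_pos.2 ⟨i₀, hPi₀⟩
              omega
      exact le_trans (ih (k-1) (by omega) τ' hτ'compl hcard') hcount
end COMB

section KEY
variable {n : ℕ} [NeZero n] {S : LinCNF n} {x : ℝ → Fin n → ℝ}

/-- Behaviour of `cyclicNm` along a solution near any time. -/
lemma key_lemma (hx : S.IsSolution x) {t₀ : ℝ} (hx0 : x t₀ ≠ 0) :
    ∃ δ > 0,
      (∀ s ∈ Set.Ioo t₀ (t₀+δ), cyclicNm n (x s) = cyclicNm n (x t₀)) ∧
      (∀ s ∈ Set.Ioo (t₀-δ) t₀, cyclicNm n (x t₀) ≤ cyclicNm n (x s)) := by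
  obtain ⟨σ, τ, hσ0, hτ0, hnzs, hrec, δ, hδ, hF, hB⟩ := chain_signs hx hx0
  have hσcompl : IsCompletion (x t₀) σ :=
    ⟨hσ0, fun i hi => by rw [(hnzs i hi).1]; exact mul_self_pos.2 hi⟩
  have hNmσ : cyclicNm n (x t₀) = cyclicN n σ := by
    apply le_antisymm (cyclicNm_le_completion hσcompl)
    obtain ⟨ρ, hρ, hρN⟩ := exists_completion_eq_cyclicNm (n := n) (x t₀)
    rw [← hρN]
    exact comb_min hx0 hσ0 (fun i hi => (hnzs i hi).1) hrec ρ hρ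
  refine ⟨δ, hδ, ?_, ?_⟩
  · intro s hs
    have hsign := hF s hs
    have hlam : x s ∈ cyclicLambda n := by
      intro i
      intro hzero
      have := hsign i
      rw [hzero] at this
      simp at this
    rw [cyclicNm_of_lambda hlam, hNmσ]
    exact cyclicN_congr_sign fun i => by nlinarith [hsign i]
  · intro s hs
    have hsign := hB s hs
    have hlam : x s ∈ cyclicLambda n := by
      intro i hzero
      have := hsign i
      rw [hzero] at this
      simp at this
    have hcompl : IsCompletion (x t₀) (x s) := by
      refine ⟨hlam, fun i hi => ?_⟩
      have h1 := hsign i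
      have h2 : τ i = x t₀ i := (hnzs i hi).2
      rw [h2] at h1
      exact h1
    rw [cyclicNm_of_lambda hlam]
    exact cyclicNm_le_completion hcompl

/-- Backward invariance of the level condition along nonvanishing solutions. -/
lemma backward_invariance (hx : S.IsSolution x) (hnz : ∀ s, x s ≠ 0) {c : ℕ}
    (h0 : c < cyclicNm n (x 0)) : ∀ t ≤ 0, c < cyclicNm n (x t) := by
  intro τ₀ hτ₀
  by_contra hcon
  push_neg at hcon
  set T := {s : ℝ | s ∈ Set.Icc τ₀ 0 ∧ cyclicNm n (x s) ≤ c} with hT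
  have hτ₀T : τ₀ ∈ T := ⟨⟨le_refl _, hτ₀⟩, hcon⟩
  have hTne : T.Nonempty := ⟨τ₀, hτ₀T⟩
  have hTbdd : BddAbove T := ⟨0, fun s hs => hs.1.2⟩
  set t₁ := sSup T with ht₁
  have ht₁mem : t₁ ∈ Set.Icc τ₀ 0 :=
    ⟨le_csSup hTbdd hτ₀T, csSup_le hTne (fun s hs => hs.1.2)⟩
  obtain ⟨δ, hδ, hFwd, hBwd⟩ := key_lemma hx (hnz t₁)
  have hPt₁ : c < cyclicNm n (x t₁) := by
    rcases eq_or_lt_of_le ht₁mem.2 with he | hlt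
    · rw [he]; exact h0
    · set s := min (t₁ + δ/2) (t₁/2) with hsdef
      have hs1 : t₁ < s := lt_min (by linarith) (by linarith)
      have hs2 : s < t₁ + δ := lt_of_le_of_lt (min_le_left _ _) (by linarith)
      have hs3 : s ≤ 0 := le_trans (min_le_right _ _) (by linarith)
      have hsnotT : s ∉ T := fun hsT => absurd (le_csSup hTbdd hsT) (not_le.2 hs1)
      have hsP : c < cyclicNm n (x s) := by
        by_contra hh
        push_neg at hh
        exact hsnotT ⟨⟨le_trans ht₁mem.1 hs1.le, hs3⟩, hh⟩
      rw [← hFwd s ⟨hs1, hs2⟩]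
      exact hsP
  have ht₁notT : t₁ ∉ T := fun h => absurd hPt₁ (not_lt.2 h.2)
  obtain ⟨s, hsT, hs⟩ := exists_lt_of_lt_csSup hTne (show t₁ - δ < t₁ by linarith)
  have hslt : s < t₁ :=
    lt_of_le_of_ne (le_csSup hTbdd hsT) (fun he => ht₁notT (he ▸ hsT))
  have := hBwd s ⟨hs, hslt⟩
  have h2 := hsT.2
  omega
end KEY

/-- If `Σ⁰ ⊆ K^h` is a linear subspace, its image `Σ^t` under
the fundamental solution operator has the same dimension for all `t`, and stays
inside `K^h` for `t ≤ 0`. -/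
theorem stmt7 (n : ℕ) [NeZero n] (hn : 2 ≤ n) (S : LinCNF n)
    (Φ : ℝ → (Fin n → ℝ) →ₗ[ℝ] (Fin n → ℝ)) (hΦ : S.IsFundamental Φ)
    (h : ℕ) (h1 : 1 ≤ h) (h2 : h ≤ (ntilde n + 1) / 2)
    (SigUp : Submodule ℝ (Fin n → ℝ)) (hSigUp : (SigUp : Set (Fin n → ℝ)) ⊆ KconeUp n h) :
    (∀ t : ℝ, Module.finrank ℝ (SigUp.map (Φ t)) = Module.finrank ℝ SigUp) ∧
    (∀ t : ℝ, t ≤ 0 → ((SigUp.map (Φ t) : Submodule ℝ (Fin n → ℝ)) : Set (Fin n → ℝ)) ⊆ KconeUp n h) := by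
  constructor
  · intro t
    exact (Submodule.equivMapOfInjective (Φ t) (fund_inj hΦ t) SigUp).finrank_eq.symm
  · intro t ht y hy
    obtain ⟨x₀, hx₀, rfl⟩ := Submodule.mem_map.1 hy
    by_cases hz : x₀ = 0
    · subst hz
      simp only [map_zero]
      exact Or.inl rfl
    · have hsol := hΦ.2 x₀
      have hnzall : ∀ s, Φ s x₀ ≠ 0 := fun s hcon => hz (fund_zero_of_zero hΦ hcon)
      have h00 : Φ 0 x₀ = x₀ := by rw [hΦ.1]; rfl
      rcases hSigUp hx₀ with hmem | hmem
      · exact absurd (by simpa using hmem) hz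
      · have h0' : 2*h - 1 < cyclicNm n ((fun s => Φ s x₀) 0) := by
          simpa [h00] using hmem
        exact Or.inr (backward_invariance hsol hnzall h0' t ht)
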